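/- (Brauer's theorem, characteristic polynomial form) Let A be a real n×n matrix, x ∈ ℝ^n a vector with A x = λ x, and v ∈ ℝ^n arbitrary. Then the characteristic polynomials satisfy the identity (t − λ) · charpoly(A + x vᵀ) = (t − (λ + vᵀx)) · charpoly(A), where x vᵀ denotes the outer product. In particular, the eigenvalues of A + x vᵀ are those of A with one copy of λ replaced by λ + vᵀx. -/

import Mathlib

open Matrix Polynomial

lemma eval_charpoly' {n : ℕ} (M : Matrix (Fin n) (Fin n) ℝ) (t : ℝ) :
    (M.charpoly).eval t = (Matrix.diagonal (fun _ => t) - M).det := by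
  rw [Matrix.charpoly, Polynomial.eval, ← Polynomial.coe_eval₂RingHom, RingHom.map_det]
  congr 1
  ext i j
  by_cases h : i = j
  · subst h
    simp [charmatrix_apply_eq, Matrix.diagonal_apply_eq]
  · simp [charmatrix_apply_ne _ _ _ h, Matrix.diagonal_apply_ne _ h, Matrix.sub_apply,
      Matrix.diagonal_apply_ne _ h]

/-- Brauer's theorem, characteristic polynomial form: If `A x = λ x` and
`v` is arbitrary, then `(t − λ) · charpoly(A + x vᵀ) = (t − (λ + vᵀx)) · charpoly(A)`. -/
theorem stmt12 {n : ℕ} (A : Matrix (Fin n) (Fin n) ℝ)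
    (x v : Fin n → ℝ) (lam : ℝ) (hx : A.mulVec x = lam • x) :
    (Polynomial.X - Polynomial.C lam) * (A + vecMulVec x v).charpoly =
      (Polynomial.X - Polynomial.C (lam + v ⬝ᵥ x)) * A.charpoly := by
  by_cases hx0 : x = 0
  · subst hx0
    have h0 : vecMulVec (0 : Fin n → ℝ) v = 0 := by
      ext i j; simp [Matrix.vecMulVec_apply]
    simp [h0]
  -- x ≠ 0 case
  apply Polynomial.eq_of_infinite_eval_eq
  have hchar : A.charpoly ≠ 0 := A.charpoly_monic.ne_zero
  have hfin' : {t : ℝ | A.charpoly.IsRoot t}.Finite := Polynomial.finite_setOf_isRoot hchar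
  have hinf : {t : ℝ | A.charpoly.eval t ≠ 0}.Infinite := by
    have hcompl : {t : ℝ | A.charpoly.eval t ≠ 0} = {t : ℝ | A.charpoly.IsRoot t}ᶜ := by
      ext t; simp [Polynomial.IsRoot]
    rw [hcompl]
    exact hfin'.infinite_compl
  refine hinf.mono ?_
  intro t ht
  · 
    simp only [Set.mem_setOf_eq] at ht ⊢
    -- M := t•1 - A is invertible
    set M : Matrix (Fin n) (Fin n) ℝ := Matrix.diagonal (fun _ => t) - A with hM
    have hdet : M.det ≠ 0 := by rwa [eval_charpoly'] at ht
    have hdetU : IsUnit M.det := isUnit_iff_ne_zero.mpr hdet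
    have hMx : M *ᵥ x = (t - lam) • x := by
      funext i
      simp [hM, Matrix.sub_mulVec, hx, Matrix.mulVec_diagonal, sub_smul, Pi.sub_apply]
      ring
    have htlam : t ≠ lam := by
      intro h
      apply hx0
      have := Matrix.mulVec_injective_iff_isUnit.mpr ((Matrix.isUnit_iff_isUnit_det M).mpr hdetU)
      have h0 : M *ᵥ x = M *ᵥ 0 := by rw [Matrix.mulVec_zero, hMx, h, sub_self, zero_smul]
      exact this h0
    have hMinvx : M⁻¹ *ᵥ x = (t - lam)⁻¹ • x := by
      have h1 : M⁻¹ *ᵥ (M *ᵥ x) = x := by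
        rw [Matrix.mulVec_mulVec, Matrix.nonsing_inv_mul _ hdetU, Matrix.one_mulVec]
      rw [hMx, Matrix.mulVec_smul] at h1
      have : (t - lam) ≠ 0 := sub_ne_zero.mpr htlam
      calc M⁻¹ *ᵥ x = (t - lam)⁻¹ • ((t - lam) • (M⁻¹ *ᵥ x)) := by
            rw [smul_smul, inv_mul_cancel₀ this, one_smul]
        _ = (t - lam)⁻¹ • x := by rw [h1]
    -- evaluate both sides
    rw [Polynomial.eval_mul, Polynomial.eval_mul, eval_charpoly', eval_charpoly']
    have hsub : Matrix.diagonal (fun _ : Fin n => t) - (A + vecMulVec x v)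
        = M + Matrix.replicateCol (Fin 1) (-x) * Matrix.replicateRow (Fin 1) v := by
      erw [← Matrix.vecMulVec_eq (Fin 1), hM]
      ext i j
      simp [Matrix.vecMulVec_apply, Matrix.sub_apply, Matrix.add_apply]
      ring
    erw [hsub, Matrix.det_add_replicateCol_mul_replicateRow hdetU]
    have hD : (1 + Matrix.replicateRow (Fin 1) v * M⁻¹ * Matrix.replicateCol (Fin 1) (-x)).det
        = 1 + v ⬝ᵥ (M⁻¹ *ᵥ (-x)) := by
      rw [Matrix.det_unique]
      rw [Matrix.add_apply, Matrix.one_apply_eq, Matrix.mul_assoc,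
        show M⁻¹ * Matrix.replicateCol (Fin 1) (-x) = Matrix.replicateCol (Fin 1) (M⁻¹ *ᵥ (-x)) from
          (Matrix.replicateCol_mulVec _ _).symm,
        Matrix.replicateRow_mul_replicateCol_apply]
    have final : eval t (X - C lam) * (M.det * (1 + v ⬝ᵥ (M⁻¹ *ᵥ (-x)))) =
        eval t (X - C (lam + v ⬝ᵥ x)) * M.det := by
      rw [Matrix.mulVec_neg, hMinvx]
      simp only [Polynomial.eval_sub, Polynomial.eval_X, Polynomial.eval_C,
        dotProduct_neg, dotProduct_smul, smul_eq_mul]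
      have ht0 : (t - lam) ≠ 0 := sub_ne_zero.mpr htlam
      field_simp
      ring
    calc eval t (X - C lam) * (M.det * (1 + Matrix.replicateRow (Fin 1) v * M⁻¹ * Matrix.replicateCol (Fin 1) (-x)).det)
        = eval t (X - C lam) * (M.det * (1 + v ⬝ᵥ (M⁻¹ *ᵥ (-x)))) := by rw [hD]
      _ = eval t (X - C (lam + v ⬝ᵥ x)) * M.det := final
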